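/- Let m, n, k be positive integers. Then the rational number ∑_{i=0}^{k} 1/(m + i·n) is not an integer. -/

import Mathlib

open Finset
namespace NagellAux
/-- If one denominator has a strictly dominant `p`-adic valuation (at least 1),
the sum of reciprocals is not an integer. -/
lemma key (a : ℕ → ℕ) (K : ℕ) (ha : ∀ i ∈ range K, 0 < a i)
    (p : ℕ) (hp : p.Prime) (i0 : ℕ) (hi0 : i0 ∈ range K)
    (h1 : 1 ≤ (a i0).factorization p)
    (hdom : ∀ j ∈ range K, j ≠ i0 → (a j).factorization p < (a i0).factorization p)
    (z : ℤ) (hz : ∑ i ∈ range K, (1 : ℚ) / (a i) = (z : ℚ)) : False := by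
  have hane : ∀ i ∈ range K, (a i : ℚ) ≠ 0 := by
    intro i hi
    exact_mod_cast (ha i hi).ne'
  -- P : the product of all denominators
  set P : ℕ := ∏ i ∈ range K, a i with hP
  have hPpos : 0 < P := Finset.prod_pos ha
  -- N : sum of products over erased sets
  set N : ℕ := ∑ i ∈ range K, ∏ j ∈ (range K).erase i, a j with hN
  -- z * P = N
  have hzP : (z : ℚ) * (P : ℚ) = (N : ℚ) := by
    rw [← hz]
    rw [Finset.sum_mul]
    rw [show ((P : ℕ) : ℚ) = ∏ i ∈ range K, (a i : ℚ) by rw [hP]; push_cast; rfl]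
    rw [show ((N : ℕ) : ℚ) = ∑ i ∈ range K, ∏ j ∈ (range K).erase i, (a j : ℚ) by rw [hN]; push_cast; rfl]
    refine Finset.sum_congr rfl ?_
    intro i hi
    rw [div_mul_eq_mul_div, one_mul, ← Finset.mul_prod_erase (range K) (fun j => (a j : ℚ)) hi,
      mul_div_cancel_left₀ _ (hane i hi)]
  have hzP' : z * (P : ℤ) = (N : ℤ) := by exact_mod_cast hzP
  -- z is positive
  have hNpos : 0 < N := by
    rw [hN]
    apply Finset.sum_pos
    · intro i hi
      exact Finset.prod_pos fun j hj => ha j (Finset.mem_of_mem_erase hj)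
    · exact ⟨i0, hi0⟩
  have hzpos : 0 < z := by
    by_contra h
    push_neg at h
    have : z * (P : ℤ) ≤ 0 := mul_nonpos_of_nonpos_of_nonneg h (by positivity)
    omega
  set Z : ℕ := z.toNat with hZ
  have hZP : Z * P = N := by
    have h1 : (Z : ℤ) = z := Int.toNat_of_nonneg hzpos.le
    have h2 : (Z : ℤ) * (P : ℤ) = (N : ℤ) := by rw [h1]; exact hzP'
    exact_mod_cast h2
  -- valuations
  set t : ℕ := (a i0).factorization p with ht
  set T : ℕ := P.factorization p with hT
  have hfacP : T = ∑ i ∈ range K, (a i).factorization p := by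
    rw [hT, hP, Nat.factorization_prod (fun i hi => (ha i hi).ne')]
    simp
  have hprod_ne : ∀ i ∈ range K, (∏ j ∈ (range K).erase i, a j) ≠ 0 := by
    intro i hi
    exact (Finset.prod_pos fun j hj => ha j (Finset.mem_of_mem_erase hj)).ne'
  -- valuation of the erased products
  have hfac_erase : ∀ i ∈ range K,
      (∏ j ∈ (range K).erase i, a j).factorization p = T - (a i).factorization p := by
    intro i hi
    have hsplit : a i * ∏ j ∈ (range K).erase i, a j = P :=
      Finset.mul_prod_erase (range K) a hi
    have := congrArg (fun x => x.factorization p) hsplit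
    rw [Nat.factorization_mul (ha i hi).ne' (hprod_ne i hi)] at this
    simp only [Finsupp.add_apply] at this
    omega
  have htT : t ≤ T := by
    rw [hfacP]
    exact Finset.single_le_sum (f := fun i => (a i).factorization p)
      (fun i _ => Nat.zero_le _) hi0
  set R : ℕ := T - t with hR
  -- p^(R+1) divides Z * P
  have hdvd1 : p ^ (R + 1) ∣ Z * P := by
    have h2 : p ^ T ∣ P := Nat.ordProj_dvd P p
    exact Dvd.dvd.mul_left (dvd_trans (pow_dvd_pow p (by omega)) h2) Z
  -- p^(R+1) divides each of the other erased products
  have hdvd2 : p ^ (R + 1) ∣ ∑ i ∈ (range K).erase i0, ∏ j ∈ (range K).erase i, a j := by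
    apply Finset.dvd_sum
    intro i hi
    have hiK : i ∈ range K := Finset.mem_of_mem_erase hi
    have hine : i ≠ i0 := Finset.ne_of_mem_erase hi
    have hlt : (a i).factorization p < t := hdom i hiK hine
    have : R + 1 ≤ (∏ j ∈ (range K).erase i, a j).factorization p := by
      rw [hfac_erase i hiK]
      have : (a i).factorization p ≤ T := by
        rw [hfacP]
        exact Finset.single_le_sum (f := fun i => (a i).factorization p)
          (fun i _ => Nat.zero_le _) hiK
      omega
    calc p ^ (R + 1) ∣ p ^ ((∏ j ∈ (range K).erase i, a j).factorization p) :=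
          pow_dvd_pow p this
      _ ∣ _ := Nat.ordProj_dvd _ p
  -- hence p^(R+1) divides the erased product at i0, contradiction
  have hsum_split : (∏ j ∈ (range K).erase i0, a j)
      + ∑ i ∈ (range K).erase i0, ∏ j ∈ (range K).erase i, a j = N := by
    rw [hN]
    exact Finset.add_sum_erase (range K) (fun i => ∏ j ∈ (range K).erase i, a j) hi0
  have hdvd3 : p ^ (R + 1) ∣ ∏ j ∈ (range K).erase i0, a j := by
    have hNd : p ^ (R + 1) ∣ N := hZP ▸ hdvd1
    have := Nat.dvd_sub hNd hdvd2
    rwa [← hsum_split, Nat.add_sub_cancel] at this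
  have hle : R + 1 ≤ (∏ j ∈ (range K).erase i0, a j).factorization p :=
    (Nat.Prime.pow_dvd_iff_le_factorization hp (hprod_ne i0 hi0)).mp hdvd3
  rw [hfac_erase i0 hi0] at hle
  omega

/-- `Lk n = ∏_{p ≤ n prime} p ^ (log p n)`, i.e. `lcm(1, ..., n)`. -/
def Lk (n : ℕ) : ℕ := ∏ p ∈ Nat.primesBelow (n + 1), p ^ (Nat.log p n)

lemma Lk_pos (n : ℕ) : 0 < Lk n := by
  apply Finset.prod_pos
  intro p hp
  exact pow_pos (Nat.prime_of_mem_primesBelow hp).pos _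

lemma Lk_factorization (n : ℕ) {q : ℕ} (hq : q.Prime) :
    (Lk n).factorization q = Nat.log q n := by
  rw [Lk, Nat.factorization_prod (fun p hp => (pow_pos (Nat.prime_of_mem_primesBelow hp).pos _).ne')]
  rw [Finset.sum_apply']
  by_cases hqn : q ∈ Nat.primesBelow (n + 1)
  · rw [Finset.sum_eq_single q]
    · rw [Nat.Prime.factorization_pow (Nat.prime_of_mem_primesBelow hqn)]
      simp
    · intro p hp hpq
      rw [Nat.Prime.factorization_pow (Nat.prime_of_mem_primesBelow hp)]
      simp [Finsupp.single_apply, hpq]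
    · intro h
      exact absurd hqn h
  · have hqn' : n < q := by
      by_contra h
      push_neg at h
      exact hqn (Nat.mem_primesBelow.mpr ⟨Nat.lt_succ_of_le h, hq⟩)
    rw [Nat.log_of_lt hqn', Finset.sum_eq_zero]
    intro p hp
    rw [Nat.Prime.factorization_pow (Nat.prime_of_mem_primesBelow hp)]
    have : p ≠ q := by
      rintro rfl
      exact hqn hp
    simp [Finsupp.single_apply, this]

lemma Lk_dvd_choose_mul (n : ℕ) (hn : 2 ≤ n) :
    Lk n ∣ n.choose (n / 2) * Lk (n - n / 2) := by
  have h2 : 0 < n / 2 := Nat.div_pos hn (by norm_num)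
  have hh : n - n / 2 < n := by omega
  have hhpos : 0 < n - n / 2 := by omega
  rw [← Nat.factorization_le_iff_dvd (Lk_pos n).ne'
    (Nat.mul_ne_zero (Nat.choose_pos (Nat.div_le_self n 2)).ne' (Lk_pos _).ne')]
  intro q
  by_cases hq : q.Prime
  swap
  · simp [Nat.factorization_eq_zero_of_not_prime _ hq]
  rw [Lk_factorization n hq,
    Nat.factorization_mul (Nat.choose_pos (Nat.div_le_self n 2)).ne' (Lk_pos _).ne']
  simp only [Finsupp.coe_add, Pi.add_apply]
  rw [Lk_factorization _ hq]
  set h : ℕ := n - n / 2 with hh'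
  -- count of e with h < q^e ≤ n is at most the valuation of the binomial coefficient
  by_cases hcmp : Nat.log q n ≤ Nat.log q h
  · omega
  push_neg at hcmp
  have hq2 : 2 ≤ q := hq.two_le
  have hfact : Fact q.Prime := ⟨hq⟩
  have hkum : (n.choose (n / 2)).factorization q =
      ((Finset.Ico 1 (Nat.log q n + 1)).filter
        fun i => q ^ i ≤ (n / 2) % q ^ i + (n - n / 2) % q ^ i).card := by
    rw [Nat.factorization_def _ hq]
    exact padicValNat_choose (Nat.div_le_self n 2) (Nat.lt_succ_self _)
  rw [hkum]
  have hsub : Finset.Icc (Nat.log q h + 1) (Nat.log q n) ⊆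
      (Finset.Ico 1 (Nat.log q n + 1)).filter
        fun i => q ^ i ≤ (n / 2) % q ^ i + (n - n / 2) % q ^ i := by
    intro e he
    rw [Finset.mem_Icc] at he
    rw [Finset.mem_filter, Finset.mem_Ico]
    refine ⟨⟨by omega, by omega⟩, ?_⟩
    have hqen : q ^ e ≤ n := Nat.pow_le_of_le_log (by omega) he.2
    have hqeh : h < q ^ e := by
      by_contra hcon
      push_neg at hcon
      have := Nat.le_log_of_pow_le (by omega) hcon
      omega
    have hmod1 : (n / 2) % q ^ e = n / 2 := Nat.mod_eq_of_lt (by omega)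
    have hmod2 : (n - n / 2) % q ^ e = n - n / 2 := Nat.mod_eq_of_lt (by omega)
    rw [hmod1, ← hh', hmod2, ← hh']
    omega
  have hcard := Finset.card_le_card hsub
  rw [Nat.card_Icc] at hcard
  omega

lemma choose_half_le (n : ℕ) : n.choose (n / 2) ≤ 4 ^ (n / 2) := by
  rcases Nat.even_or_odd n with he | ho
  · obtain ⟨m, rfl⟩ := he
    have h1 : (m + m).choose ((m + m) / 2) = (2 * m).choose m := by
      congr 1 <;> omega
    rw [h1]
    calc (2 * m).choose m ≤ ∑ i ∈ range (2 * m + 1), (2 * m).choose i :=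
          Finset.single_le_sum (f := fun i => (2 * m).choose i)
            (fun i _ => Nat.zero_le _) (by simp; omega)
      _ = 2 ^ (2 * m) := Nat.sum_range_choose (2 * m)
      _ = 4 ^ m := by rw [show 4 = 2^2 by norm_num, ← pow_mul]
      _ = 4 ^ ((m + m) / 2) := by congr 1; omega
  · obtain ⟨m, rfl⟩ := ho
    have h1 : (2 * m + 1) / 2 = m := by omega
    rw [h1]
    exact Nat.choose_middle_le_pow m

lemma Lk_le_four_pow (n : ℕ) : Lk n ≤ 4 ^ n := by
  induction n using Nat.strong_induction_on with
  | _ n ih =>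
    match n, ih with
    | 0, _ => decide
    | 1, _ => decide
    | (n + 2), ih =>
      set N := n + 2 with hN
      have h2 : 2 ≤ N := by omega
      have hh : N - N / 2 < N := by omega
      calc Lk N ≤ N.choose (N / 2) * Lk (N - N / 2) :=
            Nat.le_of_dvd (Nat.mul_pos (Nat.choose_pos (Nat.div_le_self N 2)) (Lk_pos _))
              (Lk_dvd_choose_mul N h2)
        _ ≤ 4 ^ (N / 2) * 4 ^ (N - N / 2) := Nat.mul_le_mul (choose_half_le N) (ih _ hh)
        _ = 4 ^ N := by rw [← pow_add]; congr 1; omega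

/-- Among `i < K`, the number of `i` with `q ∣ m + i*n` is at most `(K-1)/q + 1`,
provided `q` is coprime to `n`. -/
lemma card_filter_dvd_le (q n m k : ℕ) (hq : 0 < q) (hcop : Nat.Coprime q n) :
    ((range (k + 1)).filter fun i => q ∣ (m + i * n)).card ≤ k / q + 1 := by
  set s := (range (k + 1)).filter fun i => q ∣ (m + i * n) with hs
  rcases s.eq_empty_or_nonempty with he | hne
  · rw [he]; simp
  obtain ⟨r, hrs⟩ := hne
  have hrmin : ∀ i ∈ s, s.min' ⟨r, hrs⟩ ≤ i := fun i hi => Finset.min'_le s i hi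
  set r0 := s.min' ⟨r, hrs⟩ with hr0
  have hr0s : r0 ∈ s := Finset.min'_mem s _
  have key : ∀ i ∈ s, q ∣ (i - r0) := by
    intro i hi
    have h1 : q ∣ (m + i * n) := (Finset.mem_filter.mp hi).2
    have h2 : q ∣ (m + r0 * n) := (Finset.mem_filter.mp hr0s).2
    have h3 : (m + i * n) - (m + r0 * n) = (i - r0) * n := by
      rw [Nat.sub_mul]
      omega
    have h4 : q ∣ (i - r0) * n := h3 ▸ Nat.dvd_sub h1 h2
    exact hcop.dvd_of_dvd_mul_right h4
  have : s.card ≤ (range (k / q + 1)).card := by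
    apply Finset.card_le_card_of_injOn (fun i => (i - r0) / q)
    · intro i hi
      have hik : i ≤ k := by
        have := (Finset.mem_filter.mp hi).1
        rw [Finset.mem_range] at this
        omega
      simp only [Finset.coe_range, Set.mem_Iio]
      have : (i - r0) / q ≤ k / q := Nat.div_le_div_right (by omega)
      omega
    · intro i hi j hj hij
      have hdi := key i hi
      have hdj := key j hj
      have h1 : i - r0 = q * ((i - r0) / q) := (Nat.mul_div_cancel' hdi).symm
      have h2 : j - r0 = q * ((j - r0) / q) := (Nat.mul_div_cancel' hdj).symm
      have hri := hrmin i hi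
      have hrj := hrmin j hj
      simp only at hij
      rw [hij] at h1
      omega
  simpa using this


/-- The central counting argument: if no prime has a strictly dominant valuation
among the `m + i*n` (`i ≤ k`), with `m, n` coprime and `n` even, then
`n^k * 2^(v₂(k!)) ≤ Lk k`. -/
lemma counting (m n k : ℕ) (hm : 0 < m) (hn : 0 < n) (hcop : Nat.Coprime m n)
    (hneven : 2 ∣ n) (hk : 2 ≤ k)
    (hnodom : ∀ p : ℕ, p.Prime → ∀ i0 ∈ range (k + 1),
      1 ≤ (m + i0 * n).factorization p →
      ∃ j ∈ range (k + 1), j ≠ i0 ∧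
        (m + i0 * n).factorization p ≤ (m + j * n).factorization p) :
    n ^ k * 2 ^ ((Nat.factorial k).factorization 2) ≤ Lk k := by
  have hapos : ∀ i, 0 < m + i * n := fun i => by positivity
  have hmodd : ¬ 2 ∣ m := by
    intro h
    have := Nat.dvd_gcd h hneven
    rw [hcop] at this
    omega
  have haodd : ∀ i, ¬ 2 ∣ (m + i * n) := by
    intro i h
    have h2 : 2 ∣ i * n := Dvd.dvd.mul_left hneven i
    omega
  -- no prime power > k divides any term
  have hbd : ∀ p : ℕ, p.Prime → ∀ e, 1 ≤ e → ∀ i ∈ range (k + 1),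
      p ^ e ∣ (m + i * n) → p ^ e ≤ k := by
    intro p hp e he i hi hdvd
    have hpn : ¬ p ∣ n := by
      intro hpn'
      have h1 : p ∣ m := by
        have h2 : p ∣ i * n := Dvd.dvd.mul_left hpn' i
        have h3 : p ∣ (m + i * n) := dvd_trans (dvd_pow_self p (by omega)) hdvd
        exact (Nat.dvd_add_right h2).mp (by rwa [Nat.add_comm] at h3)
      have := Nat.dvd_gcd h1 hpn'
      rw [hcop] at this
      exact Nat.Prime.one_lt hp |>.ne' (Nat.le_antisymm (Nat.le_of_dvd one_pos this) hp.one_le ▸ rfl)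
    obtain ⟨istar, histar, hmax⟩ := Finset.exists_max_image (range (k + 1))
      (fun i => (m + i * n).factorization p) ⟨0, by simp⟩
    set t := (m + istar * n).factorization p with htdef
    have hvi : e ≤ (m + i * n).factorization p :=
      (Nat.Prime.pow_dvd_iff_le_factorization hp (hapos i).ne').mp hdvd
    have ht1 : 1 ≤ t := le_trans (by omega) (hmax i hi)
    obtain ⟨j, hj, hjne, hjt⟩ := hnodom p hp istar histar ht1
    -- p^t divides both terms
    have hd1 : p ^ t ∣ (m + istar * n) := Nat.ordProj_dvd _ p
    have hd2 : p ^ t ∣ (m + j * n) :=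
      dvd_trans (pow_dvd_pow p hjt) (Nat.ordProj_dvd _ p)
    -- hence p^t divides the positive difference of indices
    have hcoppow : Nat.Coprime (p ^ t) n :=
      Nat.Coprime.pow_left t ((Nat.Prime.coprime_iff_not_dvd hp).mpr hpn)
    have hdiff : p ^ t ∣ (max istar j - min istar j) := by
      apply hcoppow.dvd_of_dvd_mul_right (m := max istar j - min istar j)
      have heq : (max istar j - min istar j) * n = (m + max istar j * n) - (m + min istar j * n) := by
        rw [Nat.sub_mul]
        have : min istar j * n ≤ max istar j * n :=
          Nat.mul_le_mul_right n (min_le_max)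
        omega
      rw [heq]
      rcases le_total istar j with h | h
      · simp only [max_eq_right h, min_eq_left h]
        exact Nat.dvd_sub hd2 hd1
      · simp only [max_eq_left h, min_eq_right h]
        exact Nat.dvd_sub hd1 hd2
    have hne0 : max istar j - min istar j ≠ 0 := by
      rcases le_total istar j with h | h <;>
        simp [max_eq_right, max_eq_left, min_eq_left, min_eq_right, h] <;> omega
    have hlek : max istar j - min istar j ≤ k := by
      rw [Finset.mem_range] at hj histar
      rcases le_total istar j with h | h <;> omega
    have hptk : p ^ t ≤ k := le_trans (Nat.le_of_dvd (by omega) hdiff) hlek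
    calc p ^ e ≤ p ^ t := Nat.pow_le_pow_right hp.pos (le_trans hvi (hmax i hi))
      _ ≤ k := hptk
  -- the product of all terms
  set P : ℕ := ∏ i ∈ range (k + 1), (m + i * n) with hPdef
  have hPpos : 0 < P := Finset.prod_pos fun i _ => hapos i
  have hP2 : P.factorization 2 = 0 := by
    apply Nat.factorization_eq_zero_of_not_dvd
    intro h
    obtain ⟨i, _, hdvd⟩ := (Prime.dvd_finset_prod_iff Nat.prime_two.prime _).mp h
    exact haodd i hdvd
  -- the per-prime valuation bound
  have hval : ∀ q : ℕ, q.Prime →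
      P.factorization q ≤ (Nat.factorial k).factorization q + Nat.log q k := by
    intro q hq
    by_cases hqP : q ∣ P
    swap
    · rw [Nat.factorization_eq_zero_of_not_dvd hqP]
      omega
    obtain ⟨i1, hi1, hqd⟩ := (Prime.dvd_finset_prod_iff hq.prime _).mp hqP
    have hqk : q ≤ k := by
      have := hbd q hq 1 le_rfl i1 hi1 (by simpa using hqd)
      simpa using this
    set E := Nat.log q k with hE
    have hkpos : (0:ℕ) < k := by omega
    have hE1 : 1 ≤ E := by
      rw [hE]
      exact Nat.le_log_of_pow_le hq.two_le (by simpa using hqk)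
    -- each valuation as a count
    have hvi : ∀ i ∈ range (k + 1), (m + i * n).factorization q =
        ((Finset.Icc 1 E).filter fun e => q ^ e ∣ (m + i * n)).card := by
      intro i hi
      set v := (m + i * n).factorization q with hv
      have hvE : v ≤ E := by
        rcases Nat.eq_zero_or_pos v with h0 | h0
        · omega
        have : q ^ v ≤ k := hbd q hq v h0 i hi (Nat.ordProj_dvd _ q)
        exact Nat.le_log_of_pow_le hq.two_le this
      have : ((Finset.Icc 1 E).filter fun e => q ^ e ∣ (m + i * n)) = Finset.Icc 1 v := by
        ext e
        simp only [Finset.mem_filter, Finset.mem_Icc]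
        constructor
        · rintro ⟨⟨h1, h2⟩, h3⟩
          exact ⟨h1, (Nat.Prime.pow_dvd_iff_le_factorization hq (hapos i).ne').mp h3⟩
        · rintro ⟨h1, h2⟩
          exact ⟨⟨h1, le_trans h2 hvE⟩,
            dvd_trans (pow_dvd_pow q h2) (Nat.ordProj_dvd _ q)⟩
      rw [this, Nat.card_Icc]
      omega
    have hsum : P.factorization q = ∑ i ∈ range (k + 1), (m + i * n).factorization q := by
      rw [hPdef, Nat.factorization_prod (fun i _ => (hapos i).ne')]
      simp
    have hswap : ∑ i ∈ range (k + 1), (m + i * n).factorization q =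
        ∑ e ∈ Finset.Icc 1 E, ((range (k + 1)).filter fun i => q ^ e ∣ (m + i * n)).card := by
      rw [Finset.sum_congr rfl hvi]
      simp only [Finset.card_filter]
      rw [Finset.sum_comm]
    have hcardbd : ∀ e ∈ Finset.Icc 1 E,
        ((range (k + 1)).filter fun i => q ^ e ∣ (m + i * n)).card ≤ k / q ^ e + 1 := by
      intro e he
      apply card_filter_dvd_le _ _ _ _ (pow_pos hq.pos e)
      exact Nat.Coprime.pow_left e ((Nat.Prime.coprime_iff_not_dvd hq).mpr (by
        intro hqn'
        have h2 : q ∣ i1 * n := Dvd.dvd.mul_left hqn' i1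
        have h1 : q ∣ m := (Nat.dvd_add_right h2).mp (by rwa [Nat.add_comm] at hqd)
        have := Nat.dvd_gcd h1 hqn'
        rw [hcop] at this
        have h4 := Nat.le_of_dvd one_pos this
        have := hq.two_le
        omega))
    have hleg : (Nat.factorial k).factorization q = ∑ e ∈ Finset.Icc 1 E, k / q ^ e := by
      have : Fact q.Prime := ⟨hq⟩
      rw [Nat.factorization_def _ hq]
      rw [show Finset.Icc 1 E = Finset.Ico 1 (E + 1) by rw [Finset.Ico_add_one_right_eq_Icc]]
      exact padicValNat_factorial (by omega)
    calc P.factorization q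
        = ∑ e ∈ Finset.Icc 1 E, ((range (k + 1)).filter fun i => q ^ e ∣ (m + i * n)).card := by
          rw [hsum, hswap]
      _ ≤ ∑ e ∈ Finset.Icc 1 E, (k / q ^ e + 1) := Finset.sum_le_sum hcardbd
      _ = (∑ e ∈ Finset.Icc 1 E, k / q ^ e) + E := by
          rw [Finset.sum_add_distrib]
          simp [Nat.card_Icc]
      _ = (Nat.factorial k).factorization q + E := by rw [hleg]
  -- divisibility: 2^(v₂(k!)) * P ∣ k! * Lk k
  have hdvd : 2 ^ ((Nat.factorial k).factorization 2) * P ∣ (Nat.factorial k) * Lk k := by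
    rw [← Nat.factorization_le_iff_dvd
      (Nat.mul_ne_zero (pow_pos two_pos _).ne' hPpos.ne')
      (Nat.mul_ne_zero (Nat.factorial_pos k).ne' (Lk_pos k).ne')]
    intro q
    rw [Nat.factorization_mul (pow_pos two_pos _).ne' hPpos.ne',
      Nat.factorization_mul (Nat.factorial_pos k).ne' (Lk_pos k).ne']
    simp only [Finsupp.coe_add, Pi.add_apply]
    by_cases hq : q.Prime
    swap
    · simp [Nat.factorization_eq_zero_of_not_prime _ hq]
    rw [Lk_factorization k hq]
    rw [Nat.Prime.factorization_pow Nat.prime_two]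
    rw [Finsupp.single_apply]
    by_cases hq2 : q = 2
    · subst hq2
      rw [if_pos rfl, hP2]
      omega
    · rw [if_neg (fun h => hq2 h.symm)]
      have := hval q hq
      omega
  have hle : 2 ^ ((Nat.factorial k).factorization 2) * P ≤ (Nat.factorial k) * Lk k :=
    Nat.le_of_dvd (Nat.mul_pos (Nat.factorial_pos k) (Lk_pos k)) hdvd
  -- lower bound for P
  have hlow : n ^ k * (Nat.factorial k) ≤ P := by
    rw [hPdef, Finset.prod_range_succ']
    have h1 : ∏ i ∈ range k, ((i + 1) * n) ≤ ∏ i ∈ range k, (m + (i + 1) * n) := by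
      apply Finset.prod_le_prod' <;> intro i _ <;> omega
    have h2 : ∏ i ∈ range k, ((i + 1) * n) = (Nat.factorial k) * n ^ k := by
      rw [Finset.prod_mul_distrib, Finset.prod_range_add_one_eq_factorial]
      simp
    calc n ^ k * (Nat.factorial k) = (∏ i ∈ range k, ((i + 1) * n)) * 1 := by rw [h2]; ring
      _ ≤ (∏ i ∈ range k, (m + (i + 1) * n)) * (m + 0 * n) :=
          Nat.mul_le_mul h1 (by omega)
  have hfin : (Nat.factorial k) * (n ^ k * 2 ^ ((Nat.factorial k).factorization 2)) ≤
      (Nat.factorial k) * Lk k := by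
    calc (Nat.factorial k) * (n ^ k * 2 ^ ((Nat.factorial k).factorization 2))
        = (n ^ k * (Nat.factorial k)) * 2 ^ ((Nat.factorial k).factorization 2) := by ring
      _ ≤ P * 2 ^ ((Nat.factorial k).factorization 2) := Nat.mul_le_mul_right _ hlow
      _ = 2 ^ ((Nat.factorial k).factorization 2) * P := by ring
      _ ≤ (Nat.factorial k) * Lk k := hle
  exact Nat.le_of_mul_le_mul_left hfin (Nat.factorial_pos k)

/-- Case `n` odd: the prime 2 has a strictly dominant valuation. -/
lemma master_odd (m n k : ℕ) (hm : 0 < m) (hn : 0 < n) (hk : 1 ≤ k) (hodd : ¬ 2 ∣ n)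
    (z : ℤ) (hz : ∑ i ∈ range (k + 1), (1 : ℚ) / ((m + i * n : ℕ) : ℚ) = (z : ℚ)) : False := by
  have hapos : ∀ i, 0 < m + i * n := fun i => by positivity
  obtain ⟨istar, histar, hmax⟩ := Finset.exists_max_image (range (k + 1))
    (fun i => (m + i * n).factorization 2) ⟨0, by simp⟩
  set t := (m + istar * n).factorization 2 with htdef
  have ht1 : 1 ≤ t := by
    have hex : ∃ i ∈ range (k + 1), 2 ∣ (m + i * n) := by
      by_cases h2m : 2 ∣ m
      · exact ⟨0, by simp, by simpa using h2m⟩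
      · refine ⟨1, by simp [Finset.mem_range]; omega, ?_⟩
        simp only [one_mul]
        omega
    obtain ⟨i, hi, hdvd⟩ := hex
    have h1 : 1 ≤ (m + i * n).factorization 2 :=
      (Nat.Prime.pow_dvd_iff_le_factorization Nat.prime_two (hapos i).ne').mp (by simpa using hdvd)
    exact le_trans h1 (hmax i hi)
  have hdom : ∀ j ∈ range (k + 1), j ≠ istar →
      (m + j * n).factorization 2 < t := by
    intro j hj hjne
    by_contra hcon
    push_neg at hcon
    have hjt : (m + j * n).factorization 2 = t := le_antisymm (hmax j hj) hcon
    set lo := min istar j with hlo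
    set hi' := max istar j with hhi
    have hlov : (m + lo * n).factorization 2 = t := by
      rcases le_total istar j with h | h
      · simp [hlo, min_eq_left h, htdef]
      · simp [hlo, min_eq_right h, hjt]
    have hhiv : (m + hi' * n).factorization 2 = t := by
      rcases le_total istar j with h | h
      · simp [hhi, max_eq_right h, hjt]
      · simp [hhi, max_eq_left h, htdef]
    have hlolt : lo < hi' := by
      rcases lt_or_gt_of_ne hjne with h | h
      · rw [hlo, hhi]; omega
      · rw [hlo, hhi]; omega
    have hhik : hi' ≤ k := by
      rw [Finset.mem_range] at hj histar
      rw [hhi]; omega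
    -- 2^t divides both, hence divides the index difference
    have hd1 : 2 ^ t ∣ (m + lo * n) := hlov ▸ Nat.ordProj_dvd _ 2
    have hd2 : 2 ^ t ∣ (m + hi' * n) := hhiv ▸ Nat.ordProj_dvd _ 2
    have hcoppow : Nat.Coprime (2 ^ t) n :=
      Nat.Coprime.pow_left t ((Nat.Prime.coprime_iff_not_dvd Nat.prime_two).mpr hodd)
    have hdiff : 2 ^ t ∣ (hi' - lo) := by
      apply hcoppow.dvd_of_dvd_mul_right (m := hi' - lo)
      have heq : (hi' - lo) * n = (m + hi' * n) - (m + lo * n) := by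
        rw [Nat.sub_mul]
        have : lo * n ≤ hi' * n := Nat.mul_le_mul_right n hlolt.le
        omega
      rw [heq]
      exact Nat.dvd_sub hd2 hd1
    have h2tle : 2 ^ t ≤ hi' - lo := Nat.le_of_dvd (by omega) hdiff
    -- the term at lo + 2^t has strictly bigger valuation
    set l := lo + 2 ^ t with hldef
    have hlk : l ∈ range (k + 1) := by
      rw [Finset.mem_range]
      omega
    set b := (m + lo * n) / 2 ^ t with hbdef
    have hb : m + lo * n = 2 ^ t * b := (Nat.mul_div_cancel' hd1).symm
    have hbodd : ¬ 2 ∣ b := by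
      intro h2b
      have : 2 ^ (t + 1) ∣ (m + lo * n) := by
        rw [hb, pow_succ]
        exact Nat.mul_dvd_mul (dvd_refl _) h2b
      have := (Nat.Prime.pow_dvd_iff_le_factorization Nat.prime_two (hapos lo).ne').mp this
      omega
    have hal : m + l * n = 2 ^ t * (b + n) := by
      rw [hldef, Nat.add_mul, ← Nat.add_assoc, hb, Nat.mul_add]
    have h2bn : 2 ∣ (b + n) := by omega
    have : 2 ^ (t + 1) ∣ (m + l * n) := by
      rw [hal, pow_succ]
      exact mul_dvd_mul (dvd_refl (2 ^ t)) h2bn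
    have hge := (Nat.Prime.pow_dvd_iff_le_factorization Nat.prime_two (hapos l).ne').mp this
    have := hmax l hlk
    omega
  exact key (fun i => m + i * n) (k + 1) (fun i _ => hapos i) 2 Nat.prime_two istar histar
    ht1 hdom z hz

/-- Case `n = 2`, `k ≥ 2`, `m ≤ k+1` odd: Bertrand's postulate provides a dominant prime. -/
lemma master_two (m k : ℕ) (hm : 0 < m) (hmodd : ¬ 2 ∣ m) (hk : 2 ≤ k) (hmk : m ≤ k + 1)
    (z : ℤ) (hz : ∑ i ∈ range (k + 1), (1 : ℚ) / ((m + i * 2 : ℕ) : ℚ) = (z : ℚ)) : False := by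
  have hapos : ∀ i, 0 < m + i * 2 := fun i => by positivity
  obtain ⟨p, hp, hkp, hp2k⟩ := Nat.exists_prime_lt_and_le_two_mul k (by omega)
  have hpodd : ¬ 2 ∣ p := by
    intro h
    have := (Nat.prime_dvd_prime_iff_eq Nat.prime_two hp).mp h
    omega
  have hev : 2 ∣ (p - m) := by omega
  set i0 := (p - m) / 2 with hi0def
  have hi0r : i0 ∈ range (k + 1) := by
    rw [Finset.mem_range]
    omega
  have ha0 : m + i0 * 2 = p := by omega
  have hv1 : (m + i0 * 2).factorization p = 1 := by
    rw [ha0]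
    exact Nat.Prime.factorization_self hp
  have hdom : ∀ j ∈ range (k + 1), j ≠ i0 → (m + j * 2).factorization p < 1 := by
    intro j hj hjne
    rw [Finset.mem_range] at hj
    have hnd : ¬ p ∣ (m + j * 2) := by
      intro hdvd
      obtain ⟨c, hc⟩ := hdvd
      have hodd : ¬ 2 ∣ (m + j * 2) := by omega
      have hcodd : ¬ 2 ∣ c := by
        intro h
        apply hodd
        rw [hc]
        exact Dvd.dvd.mul_left h p
      have hc1 : c ≠ 1 := by
        intro h
        rw [h, Nat.mul_one] at hc
        omega
      have hc3 : 3 ≤ c := by omega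
      have : 3 * p ≤ m + j * 2 := by
        calc 3 * p ≤ c * p := Nat.mul_le_mul_right p hc3
          _ = m + j * 2 := by rw [hc]; ring
      omega
    rw [Nat.factorization_eq_zero_of_not_dvd hnd]
    omega
  have hdom' : ∀ j ∈ range (k + 1), j ≠ i0 →
      (m + j * 2).factorization p < (m + i0 * 2).factorization p := by
    intro j hj hjne
    rw [hv1]
    exact hdom j hj hjne
  exact key (fun i => m + i * 2) (k + 1) (fun i _ => hapos i) p hp i0 hi0r
    (by rw [hv1]) hdom' z hz

/-- The coprime master theorem. -/
lemma master (m n k : ℕ) (hm : 0 < m) (hn : 0 < n) (hk : 0 < k) (hcop : Nat.Coprime m n)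
    (z : ℤ) (hz : ∑ i ∈ range (k + 1), (1 : ℚ) / ((m + i * n : ℕ) : ℚ) = (z : ℚ)) : False := by
  have hapos : ∀ i, 0 < m + i * n := fun i => by positivity
  have haposQ : ∀ i ∈ range (k+1), (0:ℚ) < 1 / ((m + i * n : ℕ) : ℚ) := by
    intro i _
    have : (0:ℚ) < ((m + i * n : ℕ) : ℚ) := by exact_mod_cast hapos i
    positivity
  have hSpos : (0:ℚ) < ∑ i ∈ range (k + 1), (1 : ℚ) / ((m + i * n : ℕ) : ℚ) :=
    Finset.sum_pos haposQ ⟨0, by simp⟩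
  have hz1 : 1 ≤ z := by
    have : (0:ℚ) < (z:ℚ) := hz ▸ hSpos
    exact_mod_cast this
  -- k = 1 case
  rcases eq_or_lt_of_le (show 1 ≤ k from hk) with hk1 | hk2
  · have hS2 : ∑ i ∈ range (k + 1), (1 : ℚ) / ((m + i * n : ℕ) : ℚ)
        = 1 / ((m : ℕ) : ℚ) + 1 / ((m + n : ℕ) : ℚ) := by
      rw [← hk1]
      rw [Finset.sum_range_succ, Finset.sum_range_one]
      norm_num
    rcases Nat.lt_or_ge m 2 with hm1 | hm2
    · -- m = 1
      have hm1' : m = 1 := by omega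
      subst hm1'
      rw [hS2] at hz
      push_cast at hz
      have hnn : (0:ℚ) < 1 + (n:ℚ) := by positivity
      have h1 : (0:ℚ) < 1 / (1 + (n:ℚ)) := by positivity
      have h2 : 1 / (1 + (n:ℚ)) < 1 := by
        rw [div_lt_one hnn]
        have : (1:ℚ) ≤ (n:ℚ) := by exact_mod_cast hn
        linarith
      rw [one_div] at h1 h2
      have hgt : (1:ℚ) < (z:ℚ) := by rw [← hz]; norm_num; linarith
      have hlt : (z:ℚ) < 2 := by rw [← hz]; norm_num; linarith
      have hgt' : (1:ℤ) < z := by exact_mod_cast hgt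
      have hlt' : z < 2 := by exact_mod_cast hlt
      omega
    · -- m ≥ 2 : the sum is < 1
      have hmn3 : 3 ≤ m + n := by omega
      have hlt : 1 / ((m : ℕ) : ℚ) + 1 / ((m + n : ℕ) : ℚ) < 1 := by
        have e1 : 1 / ((m : ℕ) : ℚ) ≤ 1/2 := by
          apply one_div_le_one_div_of_le (by norm_num)
          exact_mod_cast hm2
        have e2 : 1 / ((m + n : ℕ) : ℚ) ≤ 1/3 := by
          apply one_div_le_one_div_of_le (by norm_num)
          exact_mod_cast hmn3
        linarith
      rw [hS2] at hz
      have : (z:ℚ) < 1 := hz ▸ hlt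
      have : z < 1 := by exact_mod_cast this
      omega
  -- now k ≥ 2
  by_cases hnodd : ¬ 2 ∣ n
  · exact master_odd m n k hm hn hk hnodd z hz
  push_neg at hnodd
  have hmodd : ¬ 2 ∣ m := by
    intro h
    have := Nat.dvd_gcd h hnodd
    rw [hcop] at this
    omega
  -- m ≤ k + 1
  have hmk : m ≤ k + 1 := by
    have hterm : ∀ i ∈ range (k + 1), (1:ℚ) / ((m + i * n : ℕ) : ℚ) ≤ 1 / ((m:ℕ):ℚ) := by
      intro i _
      apply one_div_le_one_div_of_le
      · exact_mod_cast hm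
      · exact_mod_cast Nat.le_add_right m (i * n)
    have hSle : ∑ i ∈ range (k + 1), (1:ℚ) / ((m + i * n : ℕ) : ℚ)
        ≤ (k + 1) * (1 / ((m:ℕ):ℚ)) := by
      calc ∑ i ∈ range (k + 1), (1:ℚ) / ((m + i * n : ℕ) : ℚ)
          ≤ ∑ i ∈ range (k + 1), 1 / ((m:ℕ):ℚ) := Finset.sum_le_sum hterm
        _ = (k + 1) * (1 / ((m:ℕ):ℚ)) := by
            rw [Finset.sum_const, Finset.card_range]
            simp [mul_comm]
      
    have hmq : (0:ℚ) < ((m:ℕ):ℚ) := by exact_mod_cast hm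
    have h1 : ((m:ℕ):ℚ) * (z:ℚ) ≤ (k+1 : ℚ) := by
      calc ((m:ℕ):ℚ) * (z:ℚ) = ((m:ℕ):ℚ) * ∑ i ∈ range (k + 1), (1:ℚ) / ((m + i * n : ℕ) : ℚ) := by
            rw [hz]
        _ ≤ ((m:ℕ):ℚ) * ((k + 1) * (1 / ((m:ℕ):ℚ))) := by
            apply mul_le_mul_of_nonneg_left hSle hmq.le
        _ = (k+1 : ℚ) := by field_simp
    have h2 : ((m:ℕ):ℚ) ≤ (k+1:ℚ) := by
      have hzq : (1:ℚ) ≤ (z:ℚ) := by exact_mod_cast hz1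
      nlinarith
    exact_mod_cast h2
  by_cases hn2 : n = 2
  · subst hn2
    exact master_two m k hm hmodd hk2 hmk z hz
  -- n ≥ 4 even
  have hn4 : 4 ≤ n := by omega
  by_cases hDom : ∃ p : ℕ, p.Prime ∧ ∃ i0 ∈ range (k + 1),
      1 ≤ (m + i0 * n).factorization p ∧
      ∀ j ∈ range (k + 1), j ≠ i0 →
        (m + j * n).factorization p < (m + i0 * n).factorization p
  · obtain ⟨p, hp, i0, hi0, h1, hdom⟩ := hDom
    exact key (fun i => m + i * n) (k + 1) (fun i _ => hapos i) p hp i0 hi0 h1 hdom z hz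
  push_neg at hDom
  have hnodom : ∀ p : ℕ, p.Prime → ∀ i0 ∈ range (k + 1),
      1 ≤ (m + i0 * n).factorization p →
      ∃ j ∈ range (k + 1), j ≠ i0 ∧
        (m + i0 * n).factorization p ≤ (m + j * n).factorization p := by
    intro p hp i0 hi0 h1
    obtain ⟨j, hj, hjne, hjv⟩ := hDom p hp i0 hi0 h1
    exact ⟨j, hj, hjne, hjv⟩
  have hcount := counting m n k hm hn hcop hnodd hk2 hnodom
  have hLk := Lk_le_four_pow k
  have h4n : 4 ^ k ≤ n ^ k := Nat.pow_le_pow_left hn4 k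
  have hv2 : 1 ≤ (Nat.factorial k).factorization 2 := by
    apply (Nat.Prime.pow_dvd_iff_le_factorization Nat.prime_two (Nat.factorial_pos k).ne').mp
    simpa using Nat.dvd_factorial (by norm_num) hk2
  have h2v : 2 ≤ 2 ^ ((Nat.factorial k).factorization 2) := by
    calc (2:ℕ) = 2 ^ 1 := by norm_num
      _ ≤ 2 ^ ((Nat.factorial k).factorization 2) := Nat.pow_le_pow_right (by norm_num) hv2
  have hbig : 4 ^ k * 2 ≤ n ^ k * 2 ^ ((Nat.factorial k).factorization 2) :=
    Nat.mul_le_mul h4n h2v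
  have h4pos : 1 ≤ 4 ^ k := Nat.one_le_pow k 4 (by norm_num)
  omega

end NagellAux

theorem nagell_sum_not_integer
    (m n k : ℕ) (hm : 0 < m) (hn : 0 < n) (hk : 0 < k) :
    ¬ ∃ z : ℤ, ∑ i ∈ Finset.range (k + 1), (1 : ℚ) / (m + i * n) = (z : ℚ) := by
  rintro ⟨z, hz⟩
  set d := Nat.gcd m n with hd
  have hdpos : 0 < d := Nat.gcd_pos_of_pos_left n hm
  have hdm : d ∣ m := Nat.gcd_dvd_left m n
  have hdn : d ∣ n := Nat.gcd_dvd_right m n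
  set m' := m / d with hm'
  set n' := n / d with hn'
  have hm'pos : 0 < m' := Nat.div_pos (Nat.le_of_dvd hm hdm) hdpos
  have hn'pos : 0 < n' := Nat.div_pos (Nat.le_of_dvd hn hdn) hdpos
  have hcop : Nat.Coprime m' n' := Nat.coprime_div_gcd_div_gcd hdpos
  have hmd : m = d * m' := (Nat.mul_div_cancel' hdm).symm
  have hnd : n = d * n' := (Nat.mul_div_cancel' hdn).symm
  have hz' : ∑ i ∈ Finset.range (k + 1), (1 : ℚ) / ((m' + i * n' : ℕ) : ℚ) = ((d * z : ℤ) : ℚ) := by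
    have hterm : ∀ i ∈ Finset.range (k + 1),
        (1 : ℚ) / ((m' + i * n' : ℕ) : ℚ) = (d:ℚ) * ((1:ℚ) / (m + i * n)) := by
      intro i _
      have hcast : ((m:ℚ) + i * n) = (d:ℚ) * ((m' + i * n' : ℕ) : ℚ) := by
        push_cast
        rw [hmd, hnd]
        push_cast
        ring
      rw [hcast]
      have hne : ((m' + i * n' : ℕ) : ℚ) ≠ 0 := by
        have : 0 < m' + i * n' := by positivity
        exact_mod_cast this.ne'
      have hdne : (d:ℚ) ≠ 0 := by exact_mod_cast hdpos.ne'
      field_simp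
    rw [Finset.sum_congr rfl hterm, ← Finset.mul_sum, hz]
    push_cast
    ring
  exact NagellAux.master m' n' k hm'pos hn'pos hk hcop (d * z) hz'
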